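/- Let T = ⟨α⟩ + βS be a monoscopic gluing of S = ⟨m, n_2, ..., n_k⟩, with a, a' ∈ Ap(S;m) and 0 ≤ b, b' ≤ β−1. Then b'α + a'β covers bα + aβ in the divisibility order on Ap(T; βm) if and only if one of the following holds: (i) a = a' and b' − b = 1; (ii) b = b' and a' − a = n_j for some j ≥ 2; or (iii) b = β−1, b' = 0, and a' − a = α. Moreover case (iii) occurs for some pair if and only if α ∈ Ap(S;m). -/

import Mathlib

/-- The Apéry set `Ap(S; m) = {n ∈ S : n - m ∉ S}`. -/
def apSet (S : Set ℤ) (m : ℤ) : Set ℤ := {n | n ∈ S ∧ n - m ∉ S}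

/-- `y` covers `x` in the divisibility order on the set `Ap`
(`x ⪯ y` iff `y - x ∈ Ap`). -/
def apCovers (Ap : Set ℤ) (x y : ℤ) : Prop :=
  x ∈ Ap ∧ y ∈ Ap ∧ (y - x ∈ Ap ∧ x ≠ y) ∧
    ¬∃ z ∈ Ap, (z - x ∈ Ap ∧ x ≠ z) ∧ (y - z ∈ Ap ∧ z ≠ y)

theorem stmt_15 (G : Finset ℤ) (m : ℤ) (hm : m ∈ G) (hpos : ∀ g ∈ G, 0 < g)
    (S : Set ℤ) (hS : S = (AddSubmonoid.closure (G : Set ℤ) : Set ℤ))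
    (hcof : {n : ℤ | 0 ≤ n ∧ n ∉ S}.Finite)
    (hGmin : ∀ g ∈ G, g ∉ (AddSubmonoid.closure ((G : Set ℤ) \ {g}) : Set ℤ))
    (β : ℤ) (hβ : 2 ≤ β) (α : ℤ) (hα : α ∈ S) (hαgen : α ∉ G)
    (hgcd : Int.gcd α β = 1)
    (T : Set ℤ)
    (hT : T = (AddSubmonoid.closure (insert α ((fun g => β * g) '' (G : Set ℤ))) : Set ℤ)) :
    (∀ x x' b b' : ℤ, x ∈ apSet S m → x' ∈ apSet S m →
      0 ≤ b → b ≤ β - 1 → 0 ≤ b' → b' ≤ β - 1 →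
      (apCovers (apSet T (β * m)) (b * α + x * β) (b' * α + x' * β) ↔
        ((x = x' ∧ b' - b = 1) ∨
         (b = b' ∧ (x' - x ∈ G ∧ x' - x ≠ m)) ∨
         (b = β - 1 ∧ b' = 0 ∧ x' - x = α)))) ∧
    ((∃ x x' : ℤ, x ∈ apSet S m ∧ x' ∈ apSet S m ∧ x' - x = α ∧
        apCovers (apSet T (β * m)) ((β - 1) * α + x * β) (x' * β)) ↔
      α ∈ apSet S m) := by
  have hβ0 : (0:ℤ) < β := by linarith
  have hβne : (β:ℤ) ≠ 0 := ne_of_gt hβ0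
  have hm0 : 0 < m := hpos m hm
  -- basic S facts
  have hS0 : (0:ℤ) ∈ S := by rw [hS]; exact zero_mem _
  have hSadd : ∀ u ∈ S, ∀ v ∈ S, u + v ∈ S := by
    rw [hS]; intro u hu v hv; exact add_mem hu hv
  have hSG : ∀ g ∈ G, g ∈ S := by
    rw [hS]; intro g hg; exact AddSubmonoid.subset_closure hg
  have hSnn : ∀ s ∈ S, 0 ≤ s := by
    rw [hS]; intro s hs
    induction hs using AddSubmonoid.closure_induction with
    | mem x hx => exact le_of_lt (hpos x hx)
    | zero => exact le_refl 0
    | add x y hx hy px py => linarith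
  have hSnsmul : ∀ k : ℤ, 0 ≤ k → ∀ s ∈ S, k * s ∈ S := by
    rw [hS]; intro k hk s hs
    have : k * s = k.toNat • s := by rw [nsmul_eq_mul, Int.toNat_of_nonneg hk]
    rw [this]; exact nsmul_mem hs _
  -- basic T facts
  have hT0 : (0:ℤ) ∈ T := by rw [hT]; exact zero_mem _
  have hTadd : ∀ u ∈ T, ∀ v ∈ T, u + v ∈ T := by
    rw [hT]; intro u hu v hv; exact add_mem hu hv
  have hTα : α ∈ T := by
    rw [hT]; exact AddSubmonoid.subset_closure (Set.mem_insert _ _)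
  have hTβS : ∀ s ∈ S, β * s ∈ T := by
    intro s hs
    rw [hS] at hs; rw [hT]
    induction hs using AddSubmonoid.closure_induction with
    | mem x hx =>
      exact AddSubmonoid.subset_closure (Set.mem_insert_of_mem _ ⟨x, hx, rfl⟩)
    | zero => simpa using zero_mem (AddSubmonoid.closure (insert α ((fun g => β * g) '' (G : Set ℤ))))
    | add x y hx hy px py => rw [mul_add]; exact add_mem px py
  have hTnsmul : ∀ k : ℤ, 0 ≤ k → ∀ t ∈ T, k * t ∈ T := by
    rw [hT]; intro k hk t ht
    have : k * t = k.toNat • t := by rw [nsmul_eq_mul, Int.toNat_of_nonneg hk]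
    rw [this]; exact nsmul_mem ht _
  -- representation of elements of T
  have hTrep : ∀ t ∈ T, ∃ c s, 0 ≤ c ∧ s ∈ S ∧ t = c * α + β * s := by
    intro t ht; rw [hT] at ht
    induction ht using AddSubmonoid.closure_induction with
    | mem x hx =>
      rcases hx with h | ⟨g, hg, rfl⟩
      · exact ⟨1, 0, by norm_num, hS0, by rw [h]; ring⟩
      · exact ⟨0, g, le_refl _, hSG g hg, by ring⟩
    | zero => exact ⟨0, 0, le_refl _, hS0, by ring⟩
    | add x y hx hy px py =>
      obtain ⟨c1, s1, hc1, hs1, rfl⟩ := px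
      obtain ⟨c2, s2, hc2, hs2, rfl⟩ := py
      exact ⟨c1 + c2, s1 + s2, by linarith, hSadd _ hs1 _ hs2, by ring⟩
  -- coprimality
  have hco : IsCoprime (β:ℤ) α := by
    rw [Int.isCoprime_iff_gcd_eq_one, Int.gcd_comm]; exact hgcd
  have hdvd : ∀ k : ℤ, β ∣ k * α → β ∣ k := fun k h => hco.dvd_of_dvd_mul_right h
  have hβα : ¬ (β ∣ α) := by
    intro h
    have := Int.isUnit_iff.mp (hco.isUnit_of_dvd' dvd_rfl h)
    omega
  have hαpos : 0 < α := by
    rcases lt_or_eq_of_le (hSnn α hα) with h | h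
    · exact h
    · exact absurd ⟨0, by omega⟩ hβα
  -- decomposition in S
  have hSdecomp : ∀ s ∈ S, s = 0 ∨ ∃ g ∈ G, ∃ s' ∈ S, s = g + s' := by
    intro s hs; rw [hS] at hs
    induction hs using AddSubmonoid.closure_induction with
    | mem x hx => exact Or.inr ⟨x, hx, 0, hS0, (add_zero x).symm⟩
    | zero => exact Or.inl rfl
    | add x y hx hy px py =>
      have hyS : y ∈ S := by rw [hS]; exact hy
      rcases px with rfl | ⟨g, hg, s', hs', rfl⟩
      · rcases py with rfl | ⟨g, hg, s', hs', rfl⟩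
        · exact Or.inl (by ring)
        · exact Or.inr ⟨g, hg, s', hs', by ring⟩
      · have hs'S : s' ∈ S := hs'
        exact Or.inr ⟨g, hg, s' + y, hSadd _ hs'S _ hyS, by ring⟩
  -- minimal generators of S are atoms
  have hlt : ∀ g ∈ G, ∀ u ∈ S, u < g → u ∈ (AddSubmonoid.closure ((G : Set ℤ) \ {g}) : Set ℤ) := by
    intro g hg u hu
    rw [hS] at hu
    induction hu using AddSubmonoid.closure_induction with
    | mem x hx =>
      intro hltx
      exact AddSubmonoid.subset_closure ⟨hx, by intro h; simp at h; omega⟩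
    | zero => intro _; exact zero_mem _
    | add x y hx hy px py =>
      intro hxy
      have hx0 : 0 ≤ x := hSnn x (by rw [hS]; exact hx)
      have hy0 : 0 ≤ y := hSnn y (by rw [hS]; exact hy)
      exact add_mem (px (by linarith)) (py (by linarith))
  have hGatom : ∀ g ∈ G, ∀ u ∈ S, ∀ v ∈ S, g = u + v → u = 0 ∨ v = 0 := by
    intro g hg u hu v hv huv
    by_contra hc
    push_neg at hc
    have hu0 : 0 < u := lt_of_le_of_ne (hSnn u hu) (Ne.symm hc.1)
    have hv0 : 0 < v := lt_of_le_of_ne (hSnn v hv) (Ne.symm hc.2)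
    have hmem : u + v ∈ (AddSubmonoid.closure ((G : Set ℤ) \ {g}) : Set ℤ) :=
      add_mem (hlt g hg u hu (by omega)) (hlt g hg v hv (by omega))
    exact hGmin g hg (huv.symm ▸ hmem)
  -- α is an atom of T
  have hαatom : ∀ u ∈ T, ∀ v ∈ T, α = u + v → u = 0 ∨ v = 0 := by
    intro u hu v hv huv
    obtain ⟨c1, s1, hc1, hs1, rfl⟩ := hTrep u hu
    obtain ⟨c2, s2, hc2, hs2, rfl⟩ := hTrep v hv
    have hs1n := hSnn s1 hs1; have hs2n := hSnn s2 hs2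
    have hc12 : c1 + c2 ≤ 1 := by nlinarith
    rcases (by omega : c1 + c2 = 0 ∨ c1 + c2 = 1) with h | h
    · exact absurd ⟨s1 + s2, by linear_combination huv + α * h⟩ hβα
    · have hss : β * (s1 + s2) = 0 := by linear_combination -huv - α * h
      have hss0 : s1 + s2 = 0 := by
        rcases mul_eq_zero.mp hss with h' | h'
        · exact absurd h' hβne
        · exact h'
      have hs10 : s1 = 0 := by omega
      have hs20 : s2 = 0 := by omega
      rcases (by omega : c1 = 0 ∨ c2 = 0) with h0 | h0
      · left; rw [h0, hs10]; ring
      · right; rw [h0, hs20]; ring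
  -- β*g is an atom of T for g ∈ G
  have hβGatom : ∀ g ∈ G, ∀ u ∈ T, ∀ v ∈ T, β * g = u + v → u = 0 ∨ v = 0 := by
    intro g hg u hu v hv huv
    obtain ⟨c1, s1, hc1, hs1, rfl⟩ := hTrep u hu
    obtain ⟨c2, s2, hc2, hs2, rfl⟩ := hTrep v hv
    have hs1n := hSnn s1 hs1; have hs2n := hSnn s2 hs2
    obtain ⟨k, hk⟩ := hdvd (c1 + c2) ⟨g - s1 - s2, by linear_combination -huv⟩
    have hk0 : 0 ≤ k := by nlinarith
    rcases (by omega : k = 0 ∨ 1 ≤ k) with hk1 | hk1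
    · have hk' : c1 + c2 = 0 := by rw [hk1] at hk; simpa using hk
      have hc10 : c1 = 0 := by omega
      have hc20 : c2 = 0 := by omega
      have hgss : β * g = β * (s1 + s2) := by
        linear_combination huv + α * hc10 + α * hc20
      have hgss' : g = s1 + s2 := mul_left_cancel₀ hβne hgss
      rcases hGatom g hg s1 hs1 s2 hs2 hgss' with h0 | h0
      · left; rw [hc10, h0]; ring
      · right; rw [hc20, h0]; ring
    · exfalso
      have hgk : β * g = β * (k * α + (s1 + s2)) := by linear_combination huv + α * hk
      have hgk' : g = k * α + (s1 + s2) := mul_left_cancel₀ hβne hgk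
      have hrestS : (k - 1) * α + (s1 + s2) ∈ S :=
        hSadd _ (hSnsmul (k - 1) (by omega) α hα) _ (hSadd _ hs1 _ hs2)
      have hge : g = α + ((k - 1) * α + (s1 + s2)) := by linear_combination hgk'
      rcases hGatom g hg α hα _ hrestS hge with h0 | h0
      · omega
      · have : g = α := by omega
        exact hαgen (this ▸ hg)
  -- classification of atoms of T
  have hatomclass : ∀ d ∈ T, d ≠ 0 →
      (∀ u ∈ T, ∀ v ∈ T, d = u + v → u = 0 ∨ v = 0) →
      d = α ∨ ∃ g ∈ G, d = β * g := by
    intro d hd hd0 hatom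
    obtain ⟨c, s, hc, hs, rfl⟩ := hTrep d hd
    rcases (by omega : c = 0 ∨ 1 ≤ c) with hc1 | hc1
    · subst hc1
      have hsne : s ≠ 0 := by
        intro h; rw [h] at hd0; simp at hd0
      rcases hSdecomp s hs with h | ⟨g, hg, s', hs', rfl⟩
      · exact absurd h hsne
      · rcases hatom (β * g) (hTβS g (hSG g hg)) (β * s') (hTβS s' hs') (by ring) with h0 | h0
        · exfalso
          rcases mul_eq_zero.mp h0 with h' | h'
          · exact hβne h'
          · exact absurd h' (ne_of_gt (hpos g hg))
        · have hs'0 : s' = 0 := by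
            rcases mul_eq_zero.mp h0 with h' | h'
            · exact absurd h' hβne
            · exact h'
          exact Or.inr ⟨g, hg, by rw [hs'0]; ring⟩
    · have hrestT : (c - 1) * α + β * s ∈ T :=
        hTadd _ (hTnsmul (c - 1) (by omega) α hTα) _ (hTβS s hs)
      rcases hatom α hTα _ hrestT (by ring) with h0 | h0
      · omega
      · left
        rw [show c * α + β * s = α + ((c-1) * α + β * s) by ring, h0]; ring
  -- Apéry set membership for the standard form
  have hApT : ∀ b a : ℤ, 0 ≤ b → b ≤ β - 1 → a ∈ apSet S m →
      b * α + a * β ∈ apSet T (β * m) := by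
    intro b a hb1 hb2 ha
    refine ⟨hTadd _ (hTnsmul b hb1 α hTα) _ (by rw [mul_comm]; exact hTβS a ha.1), ?_⟩
    intro h
    obtain ⟨c, s, hc, hs, heq⟩ := hTrep _ h
    obtain ⟨k, hk⟩ := hdvd (b - c) ⟨s - a + m, by linear_combination heq⟩
    have hkle : k ≤ 0 := by nlinarith
    have h2 : β * (k * α) = β * (s - a + m) := by linear_combination heq - α * hk
    have hka : k * α = s - a + m := mul_left_cancel₀ hβne h2
    have : a - m = s + (-k) * α := by linear_combination hka
    exact ha.2 (this ▸ hSadd _ hs _ (hSnsmul (-k) (by omega) α hα))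
  -- absorption: summands of Apéry elements are Apéry
  have habsorb : ∀ y ∈ apSet T (β * m), ∀ u ∈ T, ∀ v ∈ T, y = u + v →
      u ∈ apSet T (β * m) ∧ v ∈ apSet T (β * m) := by
    intro y hy u hu v hv huv
    constructor
    · refine ⟨hu, fun h => hy.2 ?_⟩
      rw [show y - β * m = (u - β * m) + v by omega]
      exact hTadd _ h _ hv
    · refine ⟨hv, fun h => hy.2 ?_⟩
      rw [show y - β * m = u + (v - β * m) by omega]
      exact hTadd _ hu _ h
  -- covers iff difference is an atom
  have hcover : ∀ x y : ℤ, x ∈ apSet T (β * m) → y ∈ apSet T (β * m) →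
      (apCovers (apSet T (β * m)) x y ↔
        (y - x ∈ T ∧ y - x ≠ 0 ∧ ∀ u ∈ T, ∀ v ∈ T, y - x = u + v → u = 0 ∨ v = 0)) := by
    intro x y hx hy
    constructor
    · rintro ⟨-, -, ⟨hd, hxy⟩, hno⟩
      refine ⟨hd.1, sub_ne_zero_of_ne (Ne.symm hxy), ?_⟩
      intro u hu v hv he
      by_contra hc
      push_neg at hc
      have hzy : y = (x + u) + v := by omega
      have hzA : x + u ∈ apSet T (β * m) :=
        (habsorb y hy (x + u) (hTadd _ hx.1 _ hu) v hv hzy).1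
      have huA : u ∈ apSet T (β * m) :=
        (habsorb (x + u) hzA x hx.1 u hu rfl).2
      have hvA : v ∈ apSet T (β * m) :=
        (habsorb y hy (x + u) (hTadd _ hx.1 _ hu) v hv hzy).2
      exact hno ⟨x + u, hzA,
        ⟨by simpa using huA, by intro h; exact hc.1 (by omega)⟩,
        ⟨by rw [show y - (x + u) = v by omega]; exact hvA,
         by intro h; exact hc.2 (by omega)⟩⟩
    · rintro ⟨hdT, hd0, hatom⟩
      have hdA : y - x ∈ apSet T (β * m) :=
        (habsorb y hy x hx.1 (y - x) hdT (by ring)).2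
      refine ⟨hx, hy, ⟨hdA, fun h => hd0 (by omega)⟩, ?_⟩
      rintro ⟨z, hzA, ⟨hzx, hxz⟩, hyz, hzy⟩
      rcases hatom (z - x) hzx.1 (y - z) hyz.1 (by ring) with h0 | h0
      · exact hxz (by omega)
      · exact hzy (by omega)
  -- the main equivalence (part 1)
  have hmain : ∀ x x' b b' : ℤ, x ∈ apSet S m → x' ∈ apSet S m →
      0 ≤ b → b ≤ β - 1 → 0 ≤ b' → b' ≤ β - 1 →
      (apCovers (apSet T (β * m)) (b * α + x * β) (b' * α + x' * β) ↔
        ((x = x' ∧ b' - b = 1) ∨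
         (b = b' ∧ (x' - x ∈ G ∧ x' - x ≠ m)) ∨
         (b = β - 1 ∧ b' = 0 ∧ x' - x = α))) := by
    intro x x' b b' hx hx' hb1 hb2 hb1' hb2'
    rw [hcover _ _ (hApT b x hb1 hb2 hx) (hApT b' x' hb1' hb2' hx')]
    constructor
    · rintro ⟨hdT, hd0, hatom⟩
      rcases hatomclass _ hdT hd0 hatom with he | ⟨g, hg, he⟩
      · -- difference is α
        obtain ⟨k, hk⟩ := hdvd (b' - b - 1) ⟨x - x', by linear_combination he⟩
        have hxa : (b' - b - 1) * α = (x - x') * β := by linear_combination he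
        have hk01 : k = 0 ∨ k = -1 := by
          rcases le_or_gt k (-2) with h | h
          · exfalso; nlinarith
          · rcases le_or_gt 1 k with h2 | h2
            · exfalso; nlinarith
            · omega
        rcases hk01 with rfl | rfl
        · left
          have hk' : b' - b - 1 = 0 := by simpa using hk
          have hbb : b' - b = 1 := by omega
          have : (x - x') * β = 0 := by linear_combination -hxa + α * hk
          rcases mul_eq_zero.mp this with h' | h'
          · exact ⟨by omega, hbb⟩
          · exact absurd h' hβne
        · right; right
          have hk' : b' - b - 1 = -β := by
            rw [hk]; ring
          have hb'0 : b' = 0 := by omega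
          have hbβ : b = β - 1 := by omega
          have h3 : (x' - x - α) * β = 0 := by linear_combination hxa - α * hk
          rcases mul_eq_zero.mp h3 with h' | h'
          · exact ⟨hbβ, hb'0, by omega⟩
          · exact absurd h' hβne
      · -- difference is β * g
        obtain ⟨k, hk⟩ := hdvd (b' - b) ⟨g - (x' - x), by linear_combination he⟩
        have hk0 : k = 0 := by
          rcases le_or_gt k (-1) with h | h
          · exfalso; nlinarith
          · rcases le_or_gt 1 k with h2 | h2
            · exfalso; nlinarith
            · omega
        have hk' : b' - b = 0 := by rw [hk0] at hk; simpa using hk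
        have hbb : b = b' := by omega
        rw [hbb] at he
        have hxg : (x' - x - g) * β = 0 := by linear_combination he
        have hxg' : x' - x = g := by
          rcases mul_eq_zero.mp hxg with h' | h'
          · omega
          · exact absurd h' hβne
        refine Or.inr (Or.inl ⟨hbb, hxg' ▸ hg, ?_⟩)
        intro hgm
        exact hx'.2 (by rw [show x' - m = x by omega]; exact hx.1)
    · rintro (⟨rfl, hbb⟩ | ⟨hbb, hg, hgm⟩ | ⟨hbβ, hb'0, hxa⟩)
      · have hd : b' * α + x * β - (b * α + x * β) = α := by linear_combination α * hbb
        rw [hd]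
        exact ⟨hTα, ne_of_gt hαpos, hαatom⟩
      · have hd : b' * α + x' * β - (b * α + x * β) = β * (x' - x) := by
          rw [hbb]; ring
        rw [hd]
        exact ⟨hTβS _ (hSG _ hg), ne_of_gt (mul_pos hβ0 (hpos _ hg)), hβGatom _ hg⟩
      · have hd : b' * α + x' * β - (b * α + x * β) = α := by
          rw [hbβ, hb'0]; linear_combination β * hxa
        rw [hd]
        exact ⟨hTα, ne_of_gt hαpos, hαatom⟩
  refine ⟨hmain, ?_⟩
  constructor
  · rintro ⟨x, x', hx, hx', hxa, -⟩
    refine ⟨hα, fun h => hx'.2 ?_⟩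
    rw [show x' - m = x + (α - m) by omega]
    exact hSadd _ hx.1 _ h
  · intro hαAp
    refine ⟨0, α, ⟨hS0, fun h => ?_⟩, hαAp, by ring, ?_⟩
    · have := hSnn _ h; omega
    · have h0Ap : (0:ℤ) ∈ apSet S m := ⟨hS0, fun h => by have := hSnn _ h; omega⟩
      have := (hmain 0 α (β - 1) 0 h0Ap hαAp (by omega) (by omega) (by omega) (by omega)).mpr
        (Or.inr (Or.inr ⟨rfl, rfl, by ring⟩))
      simpa using this
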